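/- For every f ∈ L((Z)) the trace of f for the degree-q field extension L((Z))/φ_L(L((Z))) equals φ_L(ψ_Col(f)); equivalently, Tr_{L((Z))/φ_L(L((Z)))} = φ_L ∘ ψ_Col. -/

import Mathlib

set_option synthInstance.maxHeartbeats 1000000
set_option maxHeartbeats 1000000

open PowerSeries

/-- The field `L((Z))` regarded as the base of the extension `L((Z))/φ_L(L((Z)))`, i.e. as an
algebra over itself via the Frobenius substitution `φ_L : f(Z) ↦ f([π_L](Z))`. -/
def FrobeniusBase (L : Type*) [Field L] (φ : LaurentSeries L →+* LaurentSeries L) : Type _ :=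
  LaurentSeries L

noncomputable instance (L : Type*) [Field L] (φ : LaurentSeries L →+* LaurentSeries L) :
    Field (FrobeniusBase L φ) :=
  inferInstanceAs (Field (LaurentSeries L))

noncomputable instance (L : Type*) [Field L] (φ : LaurentSeries L →+* LaurentSeries L) :
    Algebra (FrobeniusBase L φ) (LaurentSeries L) :=
  RingHom.toAlgebra (show FrobeniusBase L φ →+* LaurentSeries L from φ)

noncomputable instance (L : Type*) [Field L] (φ : LaurentSeries L →+* LaurentSeries L) :
    Module (FrobeniusBase L φ) (LaurentSeries L) :=
  Algebra.toModule

/-- `L` is a finite extension of `ℚ_p` with ring of integers `𝒪 = o_L`, prime element `π` and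
residue cardinality `q`; `Xπ = [π_L](Z)` is a Lubin-Tate series for `π`.  `φps`/`φL` denote
the substitution `f(Z) ↦ f([π_L](Z))` on `L[[Z]]` resp. on the Laurent series field `L((Z))`,
so that `L((Z))` is a `q`-dimensional extension of the subfield `φ_L(L((Z)))` with basis
`1, Z, …, Z^{q-1}` (hypothesis `B`).  `ψps`/`ψL` is the Coleman trace operator `ψ_Col`
(characterised via the `q` torsion points `LT1 ⊆ K` and the substitutions
`σ a : f(Z) ↦ f(a +_LT Z)`, and extended to `L((Z))` by
`ψ_Col(f) = Z^{-n}·ψ_Col([π_L](Z)^n f)`).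

Conclusion: for every `f ∈ L((Z))` the trace of `f` for the degree-`q` field extension
`L((Z))/φ_L(L((Z)))` equals `φ_L(ψ_Col(f))`; i.e. `Tr_{L((Z))/φ_L(L((Z)))} = φ_L ∘ ψ_Col`.
(The base field is the copy `FrobeniusBase L φL` of `L((Z))` embedded by `φL`, so the
inclusion of the trace into `L((Z))` is `algebraMap = φL`.) -/
theorem statement4_trace_eq_phi_psi
    (L : Type*) [Field L]
    (𝒪 : Subring L) (π : L) (hπ0 : π ≠ 0) (hπ𝒪 : π ∈ 𝒪)
    (q : ℕ) (hq1 : 1 < q)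
    (Xπ : PowerSeries L)
    (hXπ0 : constantCoeff (R := L) Xπ = 0)
    (hXπ1 : coeff (R := L) 1 Xπ = π)
    (hXπ𝒪 : ∀ n, coeff (R := L) n Xπ ∈ 𝒪)
    (hXπq : ∀ n, ∃ cc ∈ 𝒪, coeff (R := L) n (Xπ - X ^ q) = π * cc)
    (φps : PowerSeries L →+* PowerSeries L)
    (hφps : ∀ f k, coeff (R := L) k (φps f) =
      ∑ n ∈ Finset.range (k + 1), coeff (R := L) n f * coeff (R := L) k (Xπ ^ n))
    (φL : LaurentSeries L →+* LaurentSeries L)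
    (hφL : ∀ f : PowerSeries L,
      φL (HahnSeries.ofPowerSeries ℤ L f) = HahnSeries.ofPowerSeries ℤ L (φps f))
    -- `1, Z, …, Z^{q-1}` is a basis of `L((Z))` over `φ_L(L((Z)))`
    (B : Module.Basis (Fin q) (FrobeniusBase L φL) (LaurentSeries L))
    (hB : ∀ i : Fin q, B i = HahnSeries.single 1 1 ^ (i : ℕ))
    -- the trace operator `ψ_Col`, via the torsion points of the Lubin-Tate group
    (K : Type*) [Field K] [Algebra L K]
    (LT1 : Finset K) (hLT1 : LT1.card = q)
    (σ : K → (PowerSeries L →+* PowerSeries K))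
    (hσC : ∀ a ∈ LT1, ∀ r : L, σ a (C (R := L) r) = C (R := K) (algebraMap L K r))
    (hσ0 : ∀ a ∈ LT1, constantCoeff (R := K) (σ a X) = a)
    (hσφ : ∀ a ∈ LT1, ∀ f, σ a (φps f) = PowerSeries.map (algebraMap L K) (φps f))
    (ψps : PowerSeries L →ₗ[L] PowerSeries L)
    (hψps : ∀ f, PowerSeries.map (algebraMap L K) (φps (ψps f)) = ∑ a ∈ LT1, σ a f)
    (ψL : LaurentSeries L →ₗ[L] LaurentSeries L)
    (hψL : ∀ (f : LaurentSeries L) (n : ℕ) (h : PowerSeries L),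
      (HahnSeries.ofPowerSeries ℤ L Xπ) ^ n * f = HahnSeries.ofPowerSeries ℤ L h →
      ψL f = HahnSeries.single (-(n : ℤ)) 1 * HahnSeries.ofPowerSeries ℤ L (ψps h)) :
    ∀ f : LaurentSeries L,
      algebraMap (FrobeniusBase L φL) (LaurentSeries L)
          (Algebra.trace (FrobeniusBase L φL) (LaurentSeries L) f) =
        φL (ψL f) := by
  classical
  intro f
  -- `φps X = Xπ`
  have hφpsX : φps X = Xπ := by
    ext k
    rw [hφps]
    rcases Nat.eq_zero_or_pos k with rfl | hk
    · simpa using hXπ0.symm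
    · rw [Finset.sum_eq_single 1 (fun n _ h1 => by
          rw [PowerSeries.coeff_X, if_neg h1, zero_mul])
        (fun h => absurd (Finset.mem_range.2 (by omega)) h)]
      simp
  obtain ⟨u, hu⟩ : (X : PowerSeries L) ∣ Xπ := by
    rw [PowerSeries.X_dvd_iff]; exact hXπ0
  have hKinj : Function.Injective (algebraMap L K) := (algebraMap L K).injective
  have hmapXπ : PowerSeries.map (algebraMap L K) Xπ ≠ 0 := by
    intro h
    have h1 := congrArg (coeff (R := K) 1) h
    rw [PowerSeries.coeff_map, hXπ1, map_zero] at h1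
    exact hπ0 (hKinj (by simpa using h1))
  have hσXπ : ∀ a ∈ LT1, σ a Xπ = PowerSeries.map (algebraMap L K) Xπ := by
    intro a ha
    have h2 := hσφ a ha X
    rwa [hφpsX] at h2
  have hσX : ∀ a ∈ LT1, σ a X ≠ 0 := by
    intro a ha h
    apply hmapXπ
    rw [← hσXπ a ha, hu, map_mul, h, zero_mul]
  -- lifting ring homs `L[[Z]] → K[[Z]]` to the Laurent series fields
  have key : ∀ g : PowerSeries L →+* PowerSeries K, g X ≠ 0 →
      ∃ G : LaurentSeries L →+* LaurentSeries K,
        ∀ h : PowerSeries L, G (HahnSeries.ofPowerSeries ℤ L h)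
          = HahnSeries.ofPowerSeries ℤ K (g h) := by
    intro g hg
    have hunit : ∀ y : Submonoid.powers (PowerSeries.X : PowerSeries L),
        IsUnit (((HahnSeries.ofPowerSeries ℤ K).comp g) (y : PowerSeries L)) := by
      intro y
      obtain ⟨n, hn⟩ := y.2
      rw [← hn]
      simp only [RingHom.coe_comp, Function.comp_apply, map_pow]
      refine IsUnit.pow n (isUnit_iff_ne_zero.2 fun h0 => hg ?_)
      exact HahnSeries.ofPowerSeries_injective (h0.trans (map_zero _).symm)
    refine ⟨IsLocalization.lift (S := LaurentSeries L) hunit, fun h => ?_⟩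
    have h2 := IsLocalization.lift_eq (S := LaurentSeries L) hunit h
    rw [show (algebraMap (PowerSeries L) (LaurentSeries L)) h
        = HahnSeries.ofPowerSeries ℤ L h from congrFun LaurentSeries.coe_algebraMap h] at h2
    simpa using h2
  obtain ⟨jK, hjK⟩ := key (PowerSeries.map (algebraMap L K))
    (by rw [PowerSeries.map_X]; exact X_ne_zero)
  choose τ hτ using fun a : {x // x ∈ LT1} => key (σ (a : K)) (hσX _ a.2)
  -- `τ a` agrees with `jK` on the image of `φL`
  have hτφ : ∀ (a : {x // x ∈ LT1}) (r : LaurentSeries L), τ a (φL r) = jK (φL r) := by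
    intro a r
    have h2 : (τ a).comp φL = jK.comp φL := by
      apply IsLocalization.ringHom_ext (Submonoid.powers (PowerSeries.X : PowerSeries L))
      refine RingHom.ext fun h => ?_
      simp only [RingHom.coe_comp, Function.comp_apply]
      rw [show (algebraMap (PowerSeries L) (LaurentSeries L)) h
          = HahnSeries.ofPowerSeries ℤ L h from congrFun LaurentSeries.coe_algebraMap h,
        hφL, hτ a, hjK, hσφ _ a.2]
    exact RingHom.congr_fun h2 r
  -- the algebraically closed overfield
  let Ω := AlgebraicClosure (LaurentSeries K)
  let emb : LaurentSeries K →+* Ω := algebraMap (LaurentSeries K) Ω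
  letI : Algebra (FrobeniusBase L φL) Ω :=
    (show FrobeniusBase L φL →+* Ω from (emb.comp jK).comp φL).toAlgebra
  have halg : ∀ r : FrobeniusBase L φL,
      algebraMap (FrobeniusBase L φL) Ω r = emb (jK (φL r)) := fun r => rfl
  -- the `q` distinct embeddings
  let τA : {x // x ∈ LT1} → (LaurentSeries L →ₐ[FrobeniusBase L φL] Ω) := fun a =>
    { toRingHom := emb.comp (τ a)
      commutes' := fun r => by
        show emb (τ a ((algebraMap (FrobeniusBase L φL) (LaurentSeries L)) r))
          = algebraMap (FrobeniusBase L φL) Ω r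
        rw [show (algebraMap (FrobeniusBase L φL) (LaurentSeries L)) r = φL r from rfl,
          hτφ a r]
        exact (halg r).symm }
  have hembinj : Function.Injective emb := emb.injective
  have hτA_inj : Function.Injective τA := by
    intro a b hab
    have h1 : emb (τ a (HahnSeries.ofPowerSeries ℤ L X))
        = emb (τ b (HahnSeries.ofPowerSeries ℤ L X)) :=
      congrArg (fun g : LaurentSeries L →ₐ[FrobeniusBase L φL] Ω =>
        g (HahnSeries.ofPowerSeries ℤ L X)) hab
    rw [hτ a, hτ b] at h1
    have h2 : σ (a : K) X = σ (b : K) X :=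
      HahnSeries.ofPowerSeries_injective (hembinj h1)
    have h3 := congrArg (constantCoeff (R := K)) h2
    rw [hσ0 _ a.2, hσ0 _ b.2] at h3
    exact Subtype.ext h3
  -- counting embeddings: separability
  haveI : FiniteDimensional (FrobeniusBase L φL) (LaurentSeries L) := Module.Finite.of_basis B
  have hrank : Module.finrank (FrobeniusBase L φL) (LaurentSeries L) = q := by
    rw [Module.finrank_eq_card_basis B, Fintype.card_fin]
  haveI := Algebra.IsAlgebraic.of_finite (FrobeniusBase L φL) (LaurentSeries L)
  have hsep_le := Field.finSepDegree_le_finrank (FrobeniusBase L φL) (LaurentSeries L)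
  have hcard_eq : Field.finSepDegree (FrobeniusBase L φL) (LaurentSeries L)
      = Nat.card (LaurentSeries L →ₐ[FrobeniusBase L φL] Ω) :=
    Field.finSepDegree_eq_of_isAlgClosed _ _ _
  have hq_le : q ≤ Nat.card (LaurentSeries L →ₐ[FrobeniusBase L φL] Ω) := by
    have h1 : Nat.card {x // x ∈ LT1} = q := by
      rw [Nat.card_eq_fintype_card, Fintype.card_coe, hLT1]
    rw [← h1]
    exact Nat.card_le_card_of_injective τA hτA_inj
  have hsep_eq : Field.finSepDegree (FrobeniusBase L φL) (LaurentSeries L)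
      = Module.finrank (FrobeniusBase L φL) (LaurentSeries L) := by omega
  haveI hsep : Algebra.IsSeparable (FrobeniusBase L φL) (LaurentSeries L) :=
    (Field.finSepDegree_eq_finrank_iff _ _).1 hsep_eq
  have hbij : Function.Bijective τA := by
    rw [Fintype.bijective_iff_injective_and_card]
    refine ⟨hτA_inj, ?_⟩
    have h1 : Fintype.card (LaurentSeries L →ₐ[FrobeniusBase L φL] Ω) = q := by
      rw [← Nat.card_eq_fintype_card, ← hcard_eq, hsep_eq, hrank]
    rw [Fintype.card_coe, hLT1, h1]
  -- trace as sum of embeddings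
  have htrace : algebraMap (FrobeniusBase L φL) Ω
      (Algebra.trace (FrobeniusBase L φL) (LaurentSeries L) f)
      = ∑ a : {x // x ∈ LT1}, τA a f := by
    rw [trace_eq_sum_embeddings (E := Ω)]
    exact (Fintype.sum_bijective τA hbij _ _ fun a => rfl).symm
  -- write `f = ofPS(Xπ)⁻ⁿ · ofPS h`
  obtain ⟨⟨h0, y⟩, hy⟩ := IsLocalization.surj
    (Submonoid.powers (PowerSeries.X : PowerSeries L)) f
  obtain ⟨n, hn⟩ := y.2
  have hy' : f * HahnSeries.ofPowerSeries ℤ L (X ^ n) = HahnSeries.ofPowerSeries ℤ L h0 := by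
    have h2 := hy
    rw [show (algebraMap (PowerSeries L) (LaurentSeries L)) (y : PowerSeries L)
        = HahnSeries.ofPowerSeries ℤ L (y : PowerSeries L) from
        congrFun LaurentSeries.coe_algebraMap _,
      show (algebraMap (PowerSeries L) (LaurentSeries L)) h0
        = HahnSeries.ofPowerSeries ℤ L h0 from congrFun LaurentSeries.coe_algebraMap _] at h2
    have hn' : (X : PowerSeries L) ^ n = (y : PowerSeries L) := hn
    rw [← hn'] at h2
    exact h2
  set h : PowerSeries L := u ^ n * h0 with hh
  have hfh : (HahnSeries.ofPowerSeries ℤ L Xπ) ^ n * f = HahnSeries.ofPowerSeries ℤ L h := by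
    rw [hh, ← map_pow, hu, mul_pow, map_mul, map_mul, map_pow, map_pow]
    rw [mul_comm ((HahnSeries.ofPowerSeries ℤ L X) ^ n)
      ((HahnSeries.ofPowerSeries ℤ L u) ^ n), mul_assoc, mul_comm _ f]
    rw [show (HahnSeries.ofPowerSeries ℤ L X) ^ n
        = HahnSeries.ofPowerSeries ℤ L (X ^ n) from (map_pow _ _ _).symm, hy']
  have hψ := hψL f n h hfh
  -- compute `φL (ψL f)`
  have hXπn : φL (HahnSeries.ofPowerSeries ℤ L (X ^ n))
      = HahnSeries.ofPowerSeries ℤ L (Xπ ^ n) := by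
    rw [hφL, map_pow, hφpsX]
  have hofXπn_ne : HahnSeries.ofPowerSeries ℤ L (Xπ ^ n) ≠ 0 := by
    intro h2
    have h3 : (Xπ : PowerSeries L) ^ n = 0 :=
      HahnSeries.ofPowerSeries_injective (h2.trans (map_zero _).symm)
    have hXπne : Xπ ≠ 0 := fun h4 => hπ0 (by rw [← hXπ1, h4, map_zero])
    exact hXπne ((pow_eq_zero_iff'.mp h3).1)
  have hsingle : φL (HahnSeries.single (-(n : ℤ)) 1)
      = (HahnSeries.ofPowerSeries ℤ L (Xπ ^ n))⁻¹ := by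
    have h2 : (HahnSeries.single (-(n : ℤ)) 1 : LaurentSeries L)
        * HahnSeries.ofPowerSeries ℤ L (X ^ n) = 1 := by
      rw [HahnSeries.ofPowerSeries_X_pow, HahnSeries.single_mul_single, neg_add_cancel,
        one_mul, HahnSeries.single_zero_one]
    have h3 : φL (HahnSeries.single (-(n : ℤ)) 1)
        * HahnSeries.ofPowerSeries ℤ L (Xπ ^ n) = 1 := by
      rw [← hXπn, ← map_mul, h2, map_one]
    exact eq_inv_of_mul_eq_one_left h3
  have hφψ : φL (ψL f) = (HahnSeries.ofPowerSeries ℤ L (Xπ ^ n))⁻¹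
      * HahnSeries.ofPowerSeries ℤ L (φps (ψps h)) := by
    rw [hψ, map_mul, hφL, hsingle]
  -- compute `τ a f`
  have hιXπ_ne : HahnSeries.ofPowerSeries ℤ K (PowerSeries.map (algebraMap L K) Xπ) ≠ 0 := by
    intro h2
    exact hmapXπ (HahnSeries.ofPowerSeries_injective (h2.trans (map_zero _).symm))
  have hτf : ∀ a : {x // x ∈ LT1}, τ a f
      = (HahnSeries.ofPowerSeries ℤ K (PowerSeries.map (algebraMap L K) Xπ) ^ n)⁻¹
        * HahnSeries.ofPowerSeries ℤ K (σ (a : K) h) := by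
    intro a
    have h2 := congrArg (τ a) hfh
    rw [map_mul, map_pow, hτ a, hτ a, hσXπ _ a.2] at h2
    rw [← h2, inv_mul_cancel_left₀ (pow_ne_zero n hιXπ_ne)]
  -- sum the embeddings
  have hsum : ∑ a : {x // x ∈ LT1}, τA a f = emb (jK (φL (ψL f))) := by
    have h2 : ∀ a : {x // x ∈ LT1}, τA a f = emb (τ a f) := fun a => rfl
    have h3 : ∑ a : {x // x ∈ LT1}, τA a f
        = emb ((HahnSeries.ofPowerSeries ℤ K (PowerSeries.map (algebraMap L K) Xπ) ^ n)⁻¹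
          * HahnSeries.ofPowerSeries ℤ K (PowerSeries.map (algebraMap L K) (φps (ψps h)))) := by
      rw [hψps h,
        map_sum (HahnSeries.ofPowerSeries ℤ K) (fun a => σ a h) LT1, Finset.mul_sum,
        map_sum emb (fun a => (HahnSeries.ofPowerSeries ℤ K
          (PowerSeries.map (algebraMap L K) Xπ) ^ n)⁻¹
          * HahnSeries.ofPowerSeries ℤ K (σ a h)) LT1]
      rw [← Finset.sum_attach LT1 (fun a => emb ((HahnSeries.ofPowerSeries ℤ K
        (PowerSeries.map (algebraMap L K) Xπ) ^ n)⁻¹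
        * HahnSeries.ofPowerSeries ℤ K (σ a h)))]
      refine Finset.sum_congr rfl fun a _ => ?_
      rw [h2 a, hτf a]
    rw [h3, hφψ]
    simp only [map_mul, map_inv₀, map_pow, hjK]
  -- conclude
  have hgoal : emb (jK (φL (Algebra.trace (FrobeniusBase L φL) (LaurentSeries L) f)))
      = emb (jK (φL (ψL f))) :=
    ((halg _).symm.trans htrace).trans hsum
  exact jK.injective (hembinj hgoal)
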